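/- Let m ≥ 1 and ℓ ≥ 0 be integers and σ > 0. Then for all complex x, y the following sum formula holds: (−1)^m · m! · L_m^{(ℓ)}(|x+y|²; σ) · (x+y)^ℓ = Σ_{0≤i≤m+ℓ, 0≤j≤m} C(m+ℓ, i)·C(m, j)·P^{m,ℓ,σ}_{i,j}(y, ȳ)·x^i·x̄^j, where P^{m,ℓ,σ}_{i,j}(y,ȳ) = (−1)^{m−j}·(m−j)!·L^{(ℓ+j−i)}_{m−j}(|y|²; σ)·y^{ℓ+j−i} if ℓ+j ≥ i, and P^{m,ℓ,σ}_{i,j}(y,ȳ) = (−1)^{m+ℓ−i}·(m+ℓ−i)!·L^{(i−j−ℓ)}_{m+ℓ−i}(|y|²; σ)·ȳ^{i−j−ℓ} if ℓ+j ≤ i. -/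

import Mathlib

open Finset Complex



lemma chooseSwap (p k i : ℕ) : p.choose k * (p-k).choose i = p.choose i * (p-i).choose k := by
  rcases le_or_gt (k+i) p with h | h
  · have h1 : k ≤ k + i := Nat.le_add_right _ _
    have h2 : i ≤ k + i := Nat.le_add_left _ _
    have e1 := Nat.choose_mul (n := p) (k := k+i) (s := k) h1
    have e2 := Nat.choose_mul (n := p) (k := k+i) (s := i) h2
    have e3 : (k+i).choose k = (k+i).choose i := by
      rw [← Nat.choose_symm h1]; congr 1; omega
    simp only [Nat.add_sub_cancel_left, Nat.add_sub_cancel] at e1 e2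
    rw [← e1, ← e2] at *
    rw [e3]
  · -- degenerate: both sides zero
    rcases le_or_gt k p with hk | hk
    · rcases le_or_gt i p with hi | hi
      · have : (p-k).choose i = 0 := Nat.choose_eq_zero_of_lt (by omega)
        have h2 : (p-i).choose k = 0 := Nat.choose_eq_zero_of_lt (by omega)
        rw [this, h2, Nat.mul_zero, Nat.mul_zero]
      · have : p.choose i = 0 := Nat.choose_eq_zero_of_lt hi
        have h2 : (p-k).choose i = 0 := Nat.choose_eq_zero_of_lt (by omega)
        rw [this, h2, Nat.mul_zero, Nat.zero_mul]
    · have : p.choose k = 0 := Nat.choose_eq_zero_of_lt hk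
      have h2 : (p-i).choose k = 0 := Nat.choose_eq_zero_of_lt (by omega)
      rw [this, h2, Nat.mul_zero, Nat.zero_mul]

lemma helperZ (M r : ℕ) : ((M:ℤ)+1) * (M.choose r) = ((M:ℤ)+1-r) * ((M+1).choose r) := by
  cases r with
  | zero => simp
  | succ s =>
    have h1 : ((M:ℤ)+1) * (M.choose s) = ((M+1).choose (s+1)) * (s+1) := by
      exact_mod_cast congrArg (Nat.cast : ℕ → ℤ) (Nat.add_one_mul_choose_eq M s)
    have h2 : (((M+1).choose (s+1) : ℤ)) = M.choose s + M.choose (s+1) := by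
      exact_mod_cast congrArg (Nat.cast : ℕ → ℤ) (Nat.choose_succ_succ M s)
    push_cast
    linear_combination (-1 : ℤ) * h1 - ((M:ℤ)+1) * h2

lemma coeffId (n a k : ℕ) :
    ((n:ℤ)+2) * ((n+2+a).choose (a+k)) + ((n:ℤ)+1+a) * ((n+a).choose (a+k))
      = (2*(n:ℤ)+3+a) * ((n+1+a).choose (a+k)) + (k:ℤ) * ((n+1+a).choose (a+k-1)) := by
  cases k with
  | zero =>
    have H1 := helperZ (n+1+a) a
    have H2 := helperZ (n+a) a
    have e1 : n+1+a+1 = n+2+a := by omega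
    have e2 : n+a+1 = n+1+a := by omega
    rw [e1] at H1
    rw [e2] at H2
    simp only [Nat.add_zero]
    push_cast at H1 H2 ⊢
    linear_combination (-1 : ℤ) * H1 + H2
  | succ t =>
    have P1 : (((n+2+a).choose (a+t+1) : ℤ)) = (n+1+a).choose (a+t) + (n+1+a).choose (a+t+1) := by
      have : n+2+a = (n+1+a)+1 := by omega
      rw [this]
      exact_mod_cast congrArg (Nat.cast : ℕ → ℤ) (Nat.choose_succ_succ (n+1+a) (a+t))
    have P2 : (((n+1+a).choose (a+t+1) : ℤ)) = (n+a).choose (a+t) + (n+a).choose (a+t+1) := by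
      have : n+1+a = (n+a)+1 := by omega
      rw [this]
      exact_mod_cast congrArg (Nat.cast : ℕ → ℤ) (Nat.choose_succ_succ (n+a) (a+t))
    have H := helperZ (n+a) (a+t)
    have e2 : n+a+1 = n+1+a := by omega
    rw [e2] at H
    have e1 : a + (t+1) = a + t + 1 := by omega
    rw [e1]
    simp only [Nat.add_sub_cancel]
    push_cast at H P1 P2 ⊢
    linear_combination ((n:ℤ)+2) * P1 - ((n:ℤ)+1+a) * P2 - H

noncomputable def lag : ℕ → ℝ → ℝ → ℝ
  | 0, _, _ => 1
  | 1, l, x => 1 + l - x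
  | (k+2), l, x =>
      ((2*(k:ℝ)+3+l-x) * lag (k+1) l x - ((k:ℝ)+1+l) * lag k l x) / ((k:ℝ)+2)


noncomputable def Fc (a n k : ℕ) (x : ℝ) : ℝ :=
  (-1:ℝ)^k * ((n+a).choose (a+k) : ℝ) * x^k / (k.factorial : ℝ)

lemma Fc_zero_of_gt (a n k : ℕ) (h : n < k) (x : ℝ) : Fc a n k x = 0 := by
  have : (n+a).choose (a+k) = 0 := Nat.choose_eq_zero_of_lt (by omega)
  simp [Fc, this]

lemma lag_eq (a : ℕ) (x : ℝ) :
    ∀ n, lag n (a:ℝ) x = ∑ k ∈ range (n+1), Fc a n k x := by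
  intro n
  induction n using Nat.twoStepInduction with
  | zero =>
    simp [lag, Fc]
  | one =>
    rw [show (1:ℕ)+1 = 2 from rfl]
    rw [Finset.sum_range_succ, Finset.sum_range_one]
    simp only [Fc, lag, pow_zero, pow_one, Nat.factorial]
    have h0 : (1+a).choose (a+0) = 1+a := by
      rw [Nat.add_zero, ← Nat.choose_symm (by omega)]
      simp
    have h1 : (1+a).choose (a+1) = 1 := by
      rw [show a+1 = 1+a by omega, Nat.choose_self]
    rw [h0, h1]
    push_cast
    ring
  | more n ih1 ih2 =>
    have hne : ((n:ℝ)+2) ≠ 0 := by positivity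
    have hlag : lag (n+2) (a:ℝ) x
        = ((2*(n:ℝ)+3+(a:ℝ)-x) * lag (n+1) (a:ℝ) x - ((n:ℝ)+1+(a:ℝ)) * lag n (a:ℝ) x) / ((n:ℝ)+2) := rfl
    rw [hlag, ih1, ih2, div_eq_iff hne]
    set G : ℕ → ℝ := fun k => (-1:ℝ)^k * (k:ℝ) * (((n+1+a).choose (a+k-1) : ℕ) : ℝ) * x^k / (k.factorial : ℝ) with hG
    have hxE : x * ∑ k ∈ range (n+2), Fc a (n+1) k x = - ∑ k ∈ range (n+3), G k := by
      rw [show n+3 = (n+2)+1 from rfl]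
      conv_rhs => rw [Finset.sum_range_succ' G (n+2)]
      have hG0 : G 0 = 0 := by simp [hG]
      rw [hG0, add_zero, Finset.mul_sum, ← Finset.sum_neg_distrib]
      apply Finset.sum_congr rfl
      intro k _
      have hfac : ((k+1).factorial : ℝ) = ((k:ℝ)+1) * (k.factorial : ℝ) := by
        rw [Nat.factorial_succ]; push_cast; ring
      have hidx : a + (k+1) - 1 = a + k := by omega
      simp only [hG, Fc, hidx, hfac, pow_succ]
      have hk : (k.factorial : ℝ) ≠ 0 := by positivity
      field_simp
      push_cast
      ring
    have key : ∀ k ∈ range (n+3),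
        ((n:ℝ)+2) * Fc a (n+2) k x
          = (2*(n:ℝ)+3+(a:ℝ)) * Fc a (n+1) k x + G k - ((n:ℝ)+1+(a:ℝ)) * Fc a n k x := by
      intro k _
      have hcR : ((n:ℝ)+2) * (((n+2+a).choose (a+k) : ℕ) : ℝ) + ((n:ℝ)+1+(a:ℝ)) * (((n+a).choose (a+k) : ℕ) : ℝ)
          = (2*(n:ℝ)+3+(a:ℝ)) * (((n+1+a).choose (a+k) : ℕ) : ℝ) + (k:ℝ) * (((n+1+a).choose (a+k-1) : ℕ) : ℝ) := by
        exact_mod_cast congrArg (Int.cast : ℤ → ℝ) (coeffId n a k)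
      simp only [hG, Fc]
      have hk : (k.factorial : ℝ) ≠ 0 := by positivity
      linear_combination ((-1:ℝ)^k * x^k / (k.factorial : ℝ)) * hcR
    have hS2 : ∑ k ∈ range (n+3), Fc a (n+1) k x = ∑ k ∈ range (n+2), Fc a (n+1) k x := by
      rw [Finset.sum_range_succ, Fc_zero_of_gt a (n+1) (n+2) (by omega), add_zero]
    have hS3 : ∑ k ∈ range (n+3), Fc a n k x = ∑ k ∈ range (n+1), Fc a n k x := by
      rw [Finset.sum_range_succ, Finset.sum_range_succ,
        Fc_zero_of_gt a n (n+2) (by omega), Fc_zero_of_gt a n (n+1) (by omega), add_zero, add_zero]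
    calc (2*(n:ℝ)+3+(a:ℝ)-x) * (∑ k ∈ range (n+1+1), Fc a (n+1) k x)
          - ((n:ℝ)+1+(a:ℝ)) * (∑ k ∈ range (n+1), Fc a n k x)
        = (2*(n:ℝ)+3+(a:ℝ)) * (∑ k ∈ range (n+3), Fc a (n+1) k x)
            + (∑ k ∈ range (n+3), G k)
            - ((n:ℝ)+1+(a:ℝ)) * (∑ k ∈ range (n+3), Fc a n k x) := by
          rw [hS2, hS3]
          have : (∑ k ∈ range (n+3), G k) = - (x * ∑ k ∈ range (n+2), Fc a (n+1) k x) := by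
            rw [hxE]; ring
          rw [this]; ring
      _ = ∑ k ∈ range (n+3), (((2*(n:ℝ)+3+(a:ℝ)) * Fc a (n+1) k x + G k - ((n:ℝ)+1+(a:ℝ)) * Fc a n k x)) := by
          rw [Finset.sum_sub_distrib, Finset.sum_add_distrib, ← Finset.mul_sum, ← Finset.mul_sum]
      _ = ∑ k ∈ range (n+3), ((n:ℝ)+2) * Fc a (n+2) k x := by
          exact (Finset.sum_congr rfl key).symm
      _ = (∑ k ∈ range (n+2+1), Fc a (n+2) k x) * ((n:ℝ)+2) := by
          rw [show n+2+1 = n+3 from rfl, Finset.sum_mul]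
          exact Finset.sum_congr rfl (fun k _ => by ring)

/-- The scaled generalized Laguerre polynomial `L_n^{(ℓ)}(x; σ) = σ^n L_n^{(ℓ)}(x/σ)`. -/
noncomputable def lagS (n : ℕ) (l : ℝ) (x σ : ℝ) : ℝ := σ ^ n * lag n l (x / σ)

/-- The coefficient polynomials `P^{m,ℓ,σ}_{i,j}(y, ȳ)`. -/
noncomputable def Pcoef (m ℓ : ℕ) (σ : ℝ) (i j : ℕ) (y : ℂ) : ℂ :=
  if i ≤ ℓ + j then
    ((-1 : ℂ)) ^ (m - j) * (Nat.factorial (m - j) : ℂ)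
      * ((lagS (m - j) ((ℓ : ℝ) + j - i) (Complex.normSq y) σ : ℝ) : ℂ)
      * y ^ (ℓ + j - i)
  else
    ((-1 : ℂ)) ^ (m + ℓ - i) * (Nat.factorial (m + ℓ - i) : ℂ)
      * ((lagS (m + ℓ - i) ((i : ℝ) - j - ℓ) (Complex.normSq y) σ : ℝ) : ℂ)
      * (starRingEnd ℂ y) ^ (i - j - ℓ)

noncomputable def Hc (p q : ℕ) (σ : ℝ) (z w : ℂ) : ℂ :=
  ∑ k ∈ range (q+1), (-(σ:ℂ))^k * (k.factorial : ℂ) * (p.choose k : ℂ) * (q.choose k : ℂ)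
      * z^(p-k) * w^(q-k)

lemma Hc_ext (p q N : ℕ) (h : q ≤ N) (σ : ℝ) (z w : ℂ) :
    Hc p q σ z w = ∑ k ∈ range (N+1), (-(σ:ℂ))^k * (k.factorial : ℂ) * (p.choose k : ℂ)
      * (q.choose k : ℂ) * z^(p-k) * w^(q-k) := by
  unfold Hc
  apply Finset.sum_subset (Finset.range_subset_range.2 (by omega))
  intro k hk hk2
  have : q.choose k = 0 := Nat.choose_eq_zero_of_lt (by simp at hk2; omega)
  simp [this]

lemma Hc_symm (p q : ℕ) (σ : ℝ) (z w : ℂ) : Hc p q σ z w = Hc q p σ w z := by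
  rw [Hc_ext p q (p+q) (by omega), Hc_ext q p (p+q) (by omega)]
  apply Finset.sum_congr rfl
  intro k _
  ring

lemma Hc_add (p q : ℕ) (σ : ℝ) (z u w v : ℂ) :
    Hc p q σ (z+u) (w+v)
      = ∑ i ∈ range (p+1), ∑ j ∈ range (q+1),
          (p.choose i : ℂ) * (q.choose j : ℂ) * Hc (p-i) (q-j) σ u v * z^i * w^j := by
  set T : ℕ → ℕ → ℕ → ℂ := fun k i j =>
    (-(σ:ℂ))^k * (k.factorial : ℂ) * (p.choose k : ℂ) * (q.choose k : ℂ)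
      * ((p-k).choose i : ℂ) * ((q-k).choose j : ℂ)
      * z^i * u^(p-k-i) * w^j * v^(q-k-j) with hT
  have hA : ∀ k, k ≤ q →
      (∑ i ∈ range (p+1), z^i * u^(p-k-i) * ((p-k).choose i : ℂ)) = (z+u)^(p-k) := by
    intro k hk
    rw [add_pow]
    symm
    apply Finset.sum_subset (Finset.range_subset_range.2 (by omega))
    intro i hi hi2
    have : (p-k).choose i = 0 := Nat.choose_eq_zero_of_lt (by simp at hi2; omega)
    simp [this]
  have hB : ∀ k, k ≤ q →
      (∑ j ∈ range (q+1), w^j * v^(q-k-j) * ((q-k).choose j : ℂ)) = (w+v)^(q-k) := by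
    intro k hk
    rw [add_pow]
    symm
    apply Finset.sum_subset (Finset.range_subset_range.2 (by omega))
    intro j hj hj2
    have : (q-k).choose j = 0 := Nat.choose_eq_zero_of_lt (by simp at hj2; omega)
    simp [this]
  calc Hc p q σ (z+u) (w+v)
      = ∑ k ∈ range (q+1), ∑ i ∈ range (p+1), ∑ j ∈ range (q+1), T k i j := by
        unfold Hc
        apply Finset.sum_congr rfl
        intro k hk
        rw [← hA k (by simp at hk; omega), ← hB k (by simp at hk; omega),
          mul_assoc, Finset.sum_mul_sum]
        simp only [Finset.mul_sum]
        apply Finset.sum_congr rfl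
        intro i _
        apply Finset.sum_congr rfl
        intro j _
        rw [hT]
        ring
    _ = ∑ i ∈ range (p+1), ∑ j ∈ range (q+1), ∑ k ∈ range (q+1), T k i j := by
        rw [Finset.sum_comm]
        apply Finset.sum_congr rfl
        intro i _
        rw [Finset.sum_comm]
    _ = ∑ i ∈ range (p+1), ∑ j ∈ range (q+1),
          (p.choose i : ℂ) * (q.choose j : ℂ) * Hc (p-i) (q-j) σ u v * z^i * w^j := by
        apply Finset.sum_congr rfl
        intro i hi
        apply Finset.sum_congr rfl
        intro j hj
        have hj' := Finset.mem_range.1 hj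
        have hstep : ∑ k ∈ range (q+1), T k i j = ∑ k ∈ range (q-j+1), T k i j := by
          symm
          apply Finset.sum_subset (Finset.range_subset_range.2 (by omega))
          intro k hk hk2
          simp only [Finset.mem_range] at hk hk2
          have : (q-k).choose j = 0 := Nat.choose_eq_zero_of_lt (by omega)
          rw [hT]
          simp [this]
        rw [hstep]
        unfold Hc
        rw [Finset.mul_sum, Finset.sum_mul, Finset.sum_mul]
        symm
        apply Finset.sum_congr rfl
        intro k hk
        have h1 : (p.choose i : ℂ) * ((p-i).choose k : ℂ) = (p.choose k : ℂ) * ((p-k).choose i : ℂ) := by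
          exact_mod_cast congrArg (Nat.cast : ℕ → ℂ) (chooseSwap p k i).symm
        have h2 : (q.choose j : ℂ) * ((q-j).choose k : ℂ) = (q.choose k : ℂ) * ((q-k).choose j : ℂ) := by
          exact_mod_cast congrArg (Nat.cast : ℕ → ℂ) (chooseSwap q k j).symm
        have e1 : p - i - k = p - k - i := by omega
        have e2 : q - j - k = q - k - j := by omega
        rw [hT, e1, e2]
        calc ((p.choose i : ℂ) * (q.choose j : ℂ) *
              ((-(σ:ℂ))^k * (k.factorial : ℂ) * ((p-i).choose k : ℂ) * ((q-j).choose k : ℂ)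
                * u^(p-k-i) * v^(q-k-j))) * z^i * w^j
            = ((p.choose i : ℂ) * ((p-i).choose k : ℂ)) * ((q.choose j : ℂ) * ((q-j).choose k : ℂ))
                * ((-(σ:ℂ))^k * (k.factorial : ℂ) * u^(p-k-i) * v^(q-k-j) * z^i * w^j) := by ring
          _ = ((p.choose k : ℂ) * ((p-k).choose i : ℂ)) * ((q.choose k : ℂ) * ((q-k).choose j : ℂ))
                * ((-(σ:ℂ))^k * (k.factorial : ℂ) * u^(p-k-i) * v^(q-k-j) * z^i * w^j) := by rw [h1, h2]
          _ = (-(σ:ℂ))^k * (k.factorial : ℂ) * (p.choose k : ℂ) * (q.choose k : ℂ)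
              * ((p-k).choose i : ℂ) * ((q-k).choose j : ℂ)
              * z^i * u^(p-k-i) * w^j * v^(q-k-j) := by ring

lemma Hc_diag (p q : ℕ) (h : q ≤ p) (σ : ℝ) (hσ : σ ≠ 0) (z : ℂ) :
    Hc p q σ z (starRingEnd ℂ z)
      = (-1:ℂ)^q * (q.factorial : ℂ) * ((lagS q ((p:ℝ)-(q:ℝ)) (Complex.normSq z) σ : ℝ) : ℂ)
          * z^(p-q) := by
  have hcast : ((p:ℝ) - (q:ℝ)) = ((p - q : ℕ) : ℝ) := by
    rw [Nat.cast_sub h]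
  rw [hcast]
  unfold lagS
  rw [lag_eq (p-q) (Complex.normSq z / σ) q]
  unfold Hc
  rw [← Finset.sum_range_reflect]
  push_cast
  rw [Finset.mul_sum, Finset.mul_sum, Finset.sum_mul]
  apply Finset.sum_congr rfl
  intro k hk
  have hk' : k ≤ q := by simp at hk; omega
  unfold Fc
  have e1 : q - (q-k) = k := by omega
  have e2 : p - (q-k) = (p-q)+k := by omega
  have e3 : q + (p-q) = p := by omega
  have hfacn : (q.choose k) * k.factorial * (q-k).factorial = q.factorial :=
    Nat.choose_mul_factorial_mul_factorial hk'
  have hfac : (q.factorial : ℂ) = (q.choose k : ℂ) * (k.factorial : ℂ) * ((q-k).factorial : ℂ) := by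
    exact_mod_cast (congrArg (Nat.cast : ℕ → ℂ) hfacn).symm
  have hsym : (q.choose (q-k) : ℂ) = (q.choose k : ℂ) := by
    exact_mod_cast congrArg (Nat.cast : ℕ → ℂ) (Nat.choose_symm hk')
  have hspn : p.choose (p - (q-k)) = p.choose (q-k) := Nat.choose_symm (by omega)
  rw [e2] at hspn
  have hsp : (p.choose ((p-q)+k) : ℂ) = (p.choose (q-k) : ℂ) := by
    exact_mod_cast congrArg (Nat.cast : ℕ → ℂ) hspn
  have hzz : z * (starRingEnd ℂ) z = ((Complex.normSq z : ℝ) : ℂ) := Complex.mul_conj z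
  have hsgn : ((-1:ℂ))^(q-k) * (-1:ℂ)^k = (-1:ℂ)^q := by
    rw [← pow_add]; congr 1; omega
  have hσp : ((σ:ℂ))^(q-k) * ((σ:ℂ))^k = ((σ:ℂ))^q := by
    rw [← pow_add]; congr 1; omega
  have hσ' : ((σ:ℂ)) ≠ 0 := by exact_mod_cast Complex.ofReal_ne_zero.2 hσ
  have hkfac : ((k.factorial : ℂ)) ≠ 0 := by
    exact_mod_cast Nat.cast_ne_zero.2 (Nat.factorial_ne_zero k)
  push_cast
  have hzk : z^k * ((starRingEnd ℂ) z)^k = (((Complex.normSq z : ℝ) : ℂ))^k := by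
    rw [← mul_pow, hzz]
  rw [e1, e2, e3, hsp, hsym, pow_add, neg_pow, hfac, ← hsgn, ← hσp, div_pow, ← hzk]
  field_simp
  have hev : ((-1:ℂ))^(k*2) = 1 := Even.neg_one_pow ⟨k, by ring⟩
  ring_nf
  rw [hev, mul_one]

theorem laguerre_sum_formula (m ℓ : ℕ) (hm : 1 ≤ m) (σ : ℝ) (hσ : 0 < σ) (x y : ℂ) :
    ((-1 : ℂ)) ^ m * (Nat.factorial m : ℂ)
        * ((lagS m (ℓ : ℝ) (Complex.normSq (x + y)) σ : ℝ) : ℂ) * (x + y) ^ ℓ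
      = ∑ i ∈ Finset.range (m + ℓ + 1), ∑ j ∈ Finset.range (m + 1),
          ((m + ℓ).choose i : ℂ) * (m.choose j : ℂ) * Pcoef m ℓ σ i j y
            * x ^ i * (starRingEnd ℂ x) ^ j := by
  have hσ' : σ ≠ 0 := ne_of_gt hσ
  have h1 : ((-1 : ℂ)) ^ m * (Nat.factorial m : ℂ)
        * ((lagS m (ℓ : ℝ) (Complex.normSq (x + y)) σ : ℝ) : ℂ) * (x + y) ^ ℓ
      = Hc (m+ℓ) m σ (x+y) (starRingEnd ℂ (x+y)) := by
    rw [Hc_diag (m+ℓ) m (Nat.le_add_right m ℓ) σ hσ' (x+y)]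
    have e : m + ℓ - m = ℓ := by omega
    have e2 : (((m+ℓ:ℕ)):ℝ) - ((m:ℕ):ℝ) = (ℓ:ℝ) := by push_cast; ring
    rw [e, e2]
  rw [h1, map_add, Hc_add]
  apply Finset.sum_congr rfl
  intro i hi
  apply Finset.sum_congr rfl
  intro j hj
  have hi' := Finset.mem_range.1 hi
  have hj' := Finset.mem_range.1 hj
  have hP : Hc (m+ℓ-i) (m-j) σ y ((starRingEnd ℂ) y) = Pcoef m ℓ σ i j y := by
    unfold Pcoef
    split_ifs with hij
    · rw [Hc_diag (m+ℓ-i) (m-j) (by omega) σ hσ' y]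
      have e1 : (m+ℓ-i) - (m-j) = ℓ + j - i := by omega
      have e2 : (((m+ℓ-i:ℕ)):ℝ) - (((m-j:ℕ)):ℝ) = (ℓ:ℝ) + (j:ℝ) - (i:ℝ) := by
        rw [Nat.cast_sub (by omega), Nat.cast_sub (by omega)]
        push_cast; ring
      rw [e1, e2]
    · have hd := Hc_diag (m-j) (m+ℓ-i) (by omega) σ hσ' ((starRingEnd ℂ) y)
      rw [Complex.normSq_conj] at hd
      rw [RingHomCompTriple.comp_apply, RingHom.id_apply] at hd
      rw [Hc_symm, hd]
      have e1 : (m-j) - (m+ℓ-i) = i - j - ℓ := by omega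
      have e2 : (((m-j:ℕ)):ℝ) - (((m+ℓ-i:ℕ)):ℝ) = (i:ℝ) - (j:ℝ) - (ℓ:ℝ) := by
        rw [Nat.cast_sub (by omega), Nat.cast_sub (by omega)]
        push_cast; ring
      rw [e1, e2]
  rw [hP]
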